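/- Let N be a positive integer and let X_1,…,X_N, A_2,…,A_N, B_2,…,B_N be elements of a commutative ring. Then det_{1≤i,j≤N}( (X_i+A_N)(X_i+A_{N−1})···(X_i+A_{j+1}) · (X_i+B_j)(X_i+B_{j−1})···(X_i+B_2) ) = ∏_{1≤i<j≤N}(X_i−X_j) · ∏_{2≤i≤j≤N}(B_i−A_j), where an empty product of factors equals 1. -/

import Mathlib

set_option maxHeartbeats 1000000

open Polynomial Finset

lemma newton_expand {R : Type*} [CommRing R] :
    ∀ (n : ℕ) (b : ℕ → R) (p : R[X]), p.degree < (n : ℕ) →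
    ∃ c : ℕ → R, (∀ x : R, p.eval x =
        ∑ k ∈ Finset.range n, c k * ∏ l ∈ Finset.range k, (x - b l)) ∧
      c 0 = p.eval (b 0) := by
  rcases subsingleton_or_nontrivial R with hR | hR
  · exact fun n b p _ => ⟨0, fun x => Subsingleton.elim _ _, Subsingleton.elim _ _⟩
  intro n
  induction n with
  | zero =>
    intro b p hp
    have hp0 : p = 0 := by
      rw [← Polynomial.degree_eq_bot]
      simpa using hp
    exact ⟨0, by simp [hp0], by simp [hp0]⟩
  | succ n ih =>
    intro b p hp
    set q := p /ₘ (X - C (b 0)) with hqdef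
    have hmonic : (X - C (b 0)).Monic := monic_X_sub_C _
    have hpeq : p = (X - C (b 0)) * q + C (p.eval (b 0)) := by
      conv_lhs => rw [← Polynomial.modByMonic_add_div p (X - C (b 0))]
      rw [Polynomial.modByMonic_X_sub_C_eq_C_eval]
      ring
    have hqdeg : q.degree < (n : ℕ) := by
      rcases eq_or_ne q 0 with h | h
      · rw [h, Polynomial.degree_zero]
        exact_mod_cast WithBot.bot_lt_coe n
      · have hp0 : p ≠ 0 := by
          intro h0
          apply h
          simp [hqdef, h0]
        have h1 : 1 ≤ p.natDegree := by
          by_contra hcon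
          push_neg at hcon
          have : p.degree < (X - C (b 0)).degree := by
            rw [degree_X_sub_C]
            exact lt_of_le_of_lt degree_le_natDegree (by exact_mod_cast hcon)
          exact h ((Polynomial.divByMonic_eq_zero_iff hmonic).mpr this)
        have h2 : p.natDegree ≤ n := by
          have := (Polynomial.natDegree_lt_iff_degree_lt hp0).mpr hp
          omega
        have h3 : q.natDegree = p.natDegree - 1 := by
          rw [hqdef, Polynomial.natDegree_divByMonic p hmonic, natDegree_X_sub_C]
        rw [Polynomial.degree_eq_natDegree h]
        exact_mod_cast (by omega : q.natDegree < n)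
    obtain ⟨c', hc', -⟩ := ih (fun l => b (l + 1)) q hqdeg
    refine ⟨fun k => if k = 0 then p.eval (b 0) else c' (k - 1), fun x => ?_, by simp⟩
    have hx : p.eval x = (x - b 0) * q.eval x + p.eval (b 0) := by
      conv_lhs => rw [hpeq]
      simp
    rw [Finset.sum_range_succ']
    simp only [Nat.succ_ne_zero, if_false, Nat.add_sub_cancel, if_true, ite_true, ite_false,
      eq_self_iff_true, Finset.prod_range_zero, mul_one]
    rw [hx, hc' x, Finset.mul_sum]
    congr 1
    refine Finset.sum_congr rfl fun k _ => ?_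
    rw [Finset.prod_range_succ']
    ring

theorem determinant_lemma {R : Type*} [CommRing R] (N : ℕ) (hN : 1 ≤ N)
    (X A B : ℕ → R) :
    Matrix.det (Matrix.of fun i j : Fin N =>
        (∏ t ∈ Finset.Icc ((j:ℕ) + 2) N, (X ((i:ℕ) + 1) + A t)) *
          ∏ t ∈ Finset.Icc 2 ((j:ℕ) + 1), (X ((i:ℕ) + 1) + B t))
    = (∏ p ∈ Finset.Icc 1 N, ∏ q ∈ Finset.Ioc p N, (X p - X q)) *
        ∏ i ∈ Finset.Icc 2 N, ∏ j ∈ Finset.Icc i N, (B i - A j) := by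
  classical
  rcases subsingleton_or_nontrivial R with hR | hR
  · exact Subsingleton.elim _ _
  -- Newton coefficients for each column
  have H : ∀ j : Fin N, ∃ c : ℕ → R,
      (∀ x : R, (∏ t ∈ Finset.Icc ((j:ℕ)+2) N, (x + A t)) =
        ∑ k ∈ Finset.range (N - (j:ℕ)), c k *
          ∏ l ∈ Finset.range k, (x + B ((j:ℕ)+2+l))) ∧
      c 0 = ∏ t ∈ Finset.Icc ((j:ℕ)+2) N, (A t - B ((j:ℕ)+2)) := by
    intro j
    have hdeg : (∏ t ∈ Finset.Icc ((j:ℕ)+2) N, (Polynomial.X + Polynomial.C (A t))).degree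
        < ((N - (j:ℕ) : ℕ) : WithBot ℕ) := by
      have h1 : (∏ t ∈ Finset.Icc ((j:ℕ)+2) N,
          (Polynomial.X + Polynomial.C (A t))).natDegree ≤ (Finset.Icc ((j:ℕ)+2) N).card := by
        refine le_trans (Polynomial.natDegree_prod_le _ _) (le_of_eq ?_)
        rw [Finset.sum_congr rfl fun t _ => Polynomial.natDegree_X_add_C (A t)]
        simp
      have h2 : (Finset.Icc ((j:ℕ)+2) N).card < N - (j:ℕ) := by
        rw [Nat.card_Icc]
        have := j.isLt
        omega
      refine lt_of_le_of_lt Polynomial.degree_le_natDegree ?_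
      exact_mod_cast (by omega : (∏ t ∈ Finset.Icc ((j:ℕ)+2) N,
        (Polynomial.X + Polynomial.C (A t))).natDegree < N - (j:ℕ))
    obtain ⟨c, h1, h2⟩ := newton_expand (N - (j:ℕ)) (fun l => -B ((j:ℕ)+2+l))
      (∏ t ∈ Finset.Icc ((j:ℕ)+2) N, (Polynomial.X + Polynomial.C (A t))) hdeg
    refine ⟨c, fun x => ?_, ?_⟩
    · have := h1 x
      simpa [Polynomial.eval_prod, sub_neg_eq_add] using this
    · rw [h2]
      simp [Polynomial.eval_prod, neg_add_eq_sub]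
  choose c hc hc0 using H
  set Q : Matrix (Fin N) (Fin N) R :=
    Matrix.of fun i k : Fin N => ∏ t ∈ Finset.Icc 2 ((k:ℕ)+1), (X ((i:ℕ)+1) + B t) with hQdef
  set Cm : Matrix (Fin N) (Fin N) R :=
    Matrix.of fun k j : Fin N => if (j:ℕ) ≤ (k:ℕ) then c j ((k:ℕ) - (j:ℕ)) else 0 with hCdef
  -- the matrix factorizes
  have hM : (Matrix.of fun i j : Fin N =>
        (∏ t ∈ Finset.Icc ((j:ℕ) + 2) N, (X ((i:ℕ) + 1) + A t)) *
          ∏ t ∈ Finset.Icc 2 ((j:ℕ) + 1), (X ((i:ℕ) + 1) + B t)) = Q * Cm := by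
    ext i j
    rw [Matrix.mul_apply]
    simp only [hQdef, hCdef, Matrix.of_apply, mul_ite, mul_zero]
    rw [Fin.sum_univ_eq_sum_range (fun k => if (j:ℕ) ≤ k then
      (∏ t ∈ Finset.Icc 2 (k+1), (X ((i:ℕ)+1) + B t)) * c j (k - (j:ℕ)) else 0) N]
    rw [← Finset.sum_filter]
    have hfil : (Finset.range N).filter (fun k => (j:ℕ) ≤ k) = Finset.Ico (j:ℕ) N := by
      ext k
      simp only [Finset.mem_filter, Finset.mem_range, Finset.mem_Ico]
      omega
    rw [hfil, Finset.sum_Ico_eq_sum_range]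
    have hjoin : ∀ m : ℕ, (∏ t ∈ Finset.Icc 2 ((j:ℕ)+1), (X ((i:ℕ)+1) + B t)) *
        ∏ l ∈ Finset.range m, (X ((i:ℕ)+1) + B ((j:ℕ)+2+l))
        = ∏ t ∈ Finset.Icc 2 ((j:ℕ)+m+1), (X ((i:ℕ)+1) + B t) := by
      intro m
      have e1 : ∏ l ∈ Finset.range m, (X ((i:ℕ)+1) + B ((j:ℕ)+2+l))
          = ∏ t ∈ Finset.Ico ((j:ℕ)+2) ((j:ℕ)+2+m), (X ((i:ℕ)+1) + B t) := by
        rw [Finset.prod_Ico_eq_prod_range]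
        simp
      rw [e1, show Finset.Icc 2 ((j:ℕ)+1) = Finset.Ico 2 ((j:ℕ)+2) from by
        rw [← Finset.Ico_add_one_right_eq_Icc]; rfl]
      rw [Finset.prod_Ico_consecutive _ (by omega) (by omega)]
      rw [show Finset.Icc 2 ((j:ℕ)+m+1) = Finset.Ico 2 ((j:ℕ)+2+m) from by
        rw [← Finset.Ico_add_one_right_eq_Icc]; congr 1; omega]
    rw [hc j (X ((i:ℕ)+1))]  -- may need `v i` unfolded on LHS
    rw [Finset.sum_mul]
    refine Finset.sum_congr rfl fun m hm => ?_
    rw [Nat.add_sub_cancel_left]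
    rw [← hjoin m]
    ring
  rw [hM, Matrix.det_mul]
  -- determinant of Q
  have hdetQ : Q.det = ∏ i : Fin N, ∏ j ∈ Finset.Ioi i, (X ((j:ℕ)+1) - X ((i:ℕ)+1)) := by
    have hp : ∀ k : Fin N,
        (∏ t ∈ Finset.Icc 2 ((k:ℕ)+1), (Polynomial.X + Polynomial.C (B t))).natDegree
          = (k:ℕ) := by
      intro k
      rw [Polynomial.natDegree_prod_of_monic _ _ (fun t _ => Polynomial.monic_X_add_C (B t))]
      rw [Finset.sum_congr rfl fun t _ => Polynomial.natDegree_X_add_C (B t)]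
      simp [Nat.card_Icc]
    have hmono : ∀ k : Fin N,
        (∏ t ∈ Finset.Icc 2 ((k:ℕ)+1), (Polynomial.X + Polynomial.C (B t))).Monic :=
      fun k => Polynomial.monic_prod_of_monic _ _ (fun t _ => Polynomial.monic_X_add_C (B t))
    have hvdm := Matrix.det_eval_matrixOfPolynomials_eq_det_vandermonde
      (fun i : Fin N => X ((i:ℕ)+1))
      (fun k : Fin N => ∏ t ∈ Finset.Icc 2 ((k:ℕ)+1), (Polynomial.X + Polynomial.C (B t)))
      hp hmono
    rw [Matrix.det_vandermonde] at hvdm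
    rw [hvdm]
    congr 1
    ext i k
    simp [hQdef, Polynomial.eval_prod]
  -- determinant of Cm
  have hdetC : Cm.det = ∏ j : Fin N, ∏ t ∈ Finset.Icc ((j:ℕ)+2) N, (A t - B ((j:ℕ)+2)) := by
    rw [Matrix.det_of_lowerTriangular Cm ?ht]
    case ht =>
      intro i j hij
      have hlt : i < j := hij
      simp only [hCdef, Matrix.of_apply]
      rw [if_neg]
      exact fun h => absurd (Fin.lt_def.mp hlt) (by omega)
    refine Finset.prod_congr rfl fun j _ => ?_
    simp [hCdef, hc0 j]
  rw [hdetQ, hdetC]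
  -- sign lemmas
  have hsign : ∀ (s : Finset ℕ) (f g : ℕ → R),
      ∏ t ∈ s, (f t - g t) = (-1)^s.card * ∏ t ∈ s, (g t - f t) := by
    intro s f g
    calc ∏ t ∈ s, (f t - g t) = ∏ t ∈ s, ((-1) * (g t - f t)) :=
          Finset.prod_congr rfl fun t _ => by ring
      _ = (∏ _t ∈ s, (-1:R)) * ∏ t ∈ s, (g t - f t) := Finset.prod_mul_distrib
      _ = (-1)^s.card * ∏ t ∈ s, (g t - f t) := by rw [Finset.prod_const]
  -- the Vandermonde side
  have hfin1 : (∏ i : Fin N, ∏ j ∈ Finset.Ioi i, (X ((j:ℕ)+1) - X ((i:ℕ)+1)))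
      = (-1)^(∑ i ∈ Finset.range N, (N - (i+1))) *
        ∏ p ∈ Finset.Icc 1 N, ∏ q ∈ Finset.Ioc p N, (X p - X q) := by
    have inner : ∀ i : Fin N, (∏ j ∈ Finset.Ioi i, (X ((j:ℕ)+1) - X ((i:ℕ)+1)))
        = ∏ q ∈ Finset.Ioc (i:ℕ) (N-1), (X (q+1) - X ((i:ℕ)+1)) := by
      intro i
      rw [show Finset.Ioc (i:ℕ) (N-1) = Finset.Ioo (i:ℕ) N from by
        have := i.isLt; ext x; simp only [Finset.mem_Ioc, Finset.mem_Ioo]; omega,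
        ← Fin.map_valEmbedding_Ioi, Finset.prod_map]
      rfl
    calc (∏ i : Fin N, ∏ j ∈ Finset.Ioi i, (X ((j:ℕ)+1) - X ((i:ℕ)+1)))
        = ∏ i : Fin N, ∏ q ∈ Finset.Ioc (i:ℕ) (N-1), (X (q+1) - X ((i:ℕ)+1)) :=
          Finset.prod_congr rfl fun i _ => inner i
      _ = ∏ i ∈ Finset.range N, ∏ q ∈ Finset.Ioc i (N-1), (X (q+1) - X (i+1)) :=
          Fin.prod_univ_eq_prod_range (fun i => ∏ q ∈ Finset.Ioc i (N-1), (X (q+1) - X (i+1))) N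
      _ = ∏ i ∈ Finset.range N, ∏ l ∈ Finset.range (N - (i+1)), (X (i+1+l+1) - X (i+1)) := by
          refine Finset.prod_congr rfl fun i hi => ?_
          rw [show Finset.Ioc i (N-1) = Finset.Ico (i+1) N from by
            rw [← Finset.Icc_add_one_left_eq_Ioc, ← Finset.Ico_add_one_right_eq_Icc]
            congr 1
            simp only [Finset.mem_range] at hi
            omega]
          rw [Finset.prod_Ico_eq_prod_range]
      _ = ∏ i ∈ Finset.range N, ((-1)^(N - (i+1)) *
            ∏ l ∈ Finset.range (N - (i+1)), (X (i+1) - X (i+1+l+1))) := by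
          refine Finset.prod_congr rfl fun i _ => ?_
          rw [hsign (Finset.range (N - (i+1))) (fun l => X (i+1+l+1)) (fun l => X (i+1)),
            Finset.card_range]
      _ = (-1)^(∑ i ∈ Finset.range N, (N - (i+1))) *
            ∏ i ∈ Finset.range N, ∏ l ∈ Finset.range (N - (i+1)), (X (i+1) - X (i+1+l+1)) := by
          rw [Finset.prod_mul_distrib, Finset.prod_pow_eq_pow_sum]
      _ = (-1)^(∑ i ∈ Finset.range N, (N - (i+1))) *
            ∏ p ∈ Finset.Icc 1 N, ∏ q ∈ Finset.Ioc p N, (X p - X q) := by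
          congr 1
          rw [show Finset.Icc 1 N = Finset.Ico 1 (N+1) from (Finset.Ico_add_one_right_eq_Icc 1 N).symm,
            Finset.prod_Ico_eq_prod_range]
          refine Finset.prod_congr (by congr 1 <;> omega) fun i _ => ?_
          rw [show Finset.Ioc (1+i) N = Finset.Ico (1+i+1) (N+1) from by
            rw [← Finset.Icc_add_one_left_eq_Ioc, ← Finset.Ico_add_one_right_eq_Icc],
            Finset.prod_Ico_eq_prod_range]
          rw [show (N+1) - (1+i+1) = N - (i+1) from by omega]
          refine Finset.prod_congr rfl fun l _ => ?_
          rw [show 1+i = i+1 from by omega, show i+1+1+l = i+1+l+1 from by omega]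
  -- the coefficient side
  have hfin2 : (∏ j : Fin N, ∏ t ∈ Finset.Icc ((j:ℕ)+2) N, (A t - B ((j:ℕ)+2)))
      = (-1)^(∑ i ∈ Finset.range N, (N - (i+1))) *
        ∏ i ∈ Finset.Icc 2 N, ∏ t ∈ Finset.Icc i N, (B i - A t) := by
    calc (∏ j : Fin N, ∏ t ∈ Finset.Icc ((j:ℕ)+2) N, (A t - B ((j:ℕ)+2)))
        = ∏ j ∈ Finset.range N, ∏ t ∈ Finset.Icc (j+2) N, (A t - B (j+2)) :=
          Fin.prod_univ_eq_prod_range (fun j => ∏ t ∈ Finset.Icc (j+2) N, (A t - B (j+2))) N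
      _ = ∏ j ∈ Finset.range N, ((-1)^(N - (j+1)) *
            ∏ t ∈ Finset.Icc (j+2) N, (B (j+2) - A t)) := by
          refine Finset.prod_congr rfl fun j _ => ?_
          rw [hsign (Finset.Icc (j+2) N) A (fun _ => B (j+2)), Nat.card_Icc,
            show N + 1 - (j+2) = N - (j+1) from by omega]
      _ = (-1)^(∑ i ∈ Finset.range N, (N - (i+1))) *
            ∏ j ∈ Finset.range N, ∏ t ∈ Finset.Icc (j+2) N, (B (j+2) - A t) := by
          rw [Finset.prod_mul_distrib, Finset.prod_pow_eq_pow_sum]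
      _ = (-1)^(∑ i ∈ Finset.range N, (N - (i+1))) *
            ∏ i ∈ Finset.Icc 2 N, ∏ t ∈ Finset.Icc i N, (B i - A t) := by
          congr 1
          have htop : (∏ i ∈ Finset.Icc 2 (N+1), ∏ t ∈ Finset.Icc i N, (B i - A t))
              = ∏ i ∈ Finset.Icc 2 N, ∏ t ∈ Finset.Icc i N, (B i - A t) := by
            rw [Finset.prod_Icc_succ_top (by omega : 2 ≤ N+1)]
            rw [Finset.Icc_eq_empty (by omega : ¬ (N+1) ≤ N), Finset.prod_empty, mul_one]
          rw [← htop]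
          rw [show Finset.Icc 2 (N+1) = Finset.Ico 2 (N+2) from (Finset.Ico_add_one_right_eq_Icc 2 (N+1)).symm,
            Finset.prod_Ico_eq_prod_range]
          refine Finset.prod_congr (by congr 1 <;> omega) fun j _ => ?_
          rw [show 2+j = j+2 from by omega]
  rw [hfin1, hfin2]
  set K := ∑ i ∈ Finset.range N, (N - (i+1)) with hK
  have hone : ((-1:R)^K) * ((-1:R)^K) = 1 := by
    rw [← pow_add]
    exact Even.neg_one_pow ⟨K, rfl⟩
  calc ((-1:R)^K * ∏ p ∈ Finset.Icc 1 N, ∏ q ∈ Finset.Ioc p N, (X p - X q)) *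
        ((-1:R)^K * ∏ i ∈ Finset.Icc 2 N, ∏ t ∈ Finset.Icc i N, (B i - A t))
      = ((-1:R)^K * (-1:R)^K) *
        ((∏ p ∈ Finset.Icc 1 N, ∏ q ∈ Finset.Ioc p N, (X p - X q)) *
          ∏ i ∈ Finset.Icc 2 N, ∏ t ∈ Finset.Icc i N, (B i - A t)) := by ring
    _ = _ := by rw [hone, one_mul]
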